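/- arXiv:1501.00597 — 2 statements merged into one kernel-verified Lean document; each statement's English description precedes it below -/
import Mathlib

section
/- Monotone convergence for natural density: let (Aₙ) be a sequence of density sets with Aₙ ⪯_𝒩 A_{n+1} for every n. Then there exists a density set A such that: Aₙ ⪯_𝒩 A for every n; d(A) = sup_n d(Aₙ) = lim_n d(Aₙ); and A ⪯_𝒩 B for every density set B satisfying Aₙ ⪯_𝒩 B for all n. In other words, every ⪯_𝒩-increasing sequence in 𝒟/~ has a least upper bound in 𝒟/~, and the density of this least upper bound equals the supremum of the densities. -/
/-- The counting sequence `n ↦ |A ∩ {1,…,n}| / n` of a set of natural numbers. -/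
noncomputable def densSeq (A : Set ℕ) (n : ℕ) : ℝ :=
  (Nat.card ↥(A ∩ Set.Icc 1 n) : ℝ) / (n : ℝ)

/-- `A` has natural density `a`. -/
def HasDens (A : Set ℕ) (a : ℝ) : Prop :=
  Filter.Tendsto (densSeq A) Filter.atTop (nhds a)

/-- `A` is a density set, i.e. its natural density exists. -/
def IsDensitySet (A : Set ℕ) : Prop := ∃ a, HasDens A a

/-- `A` is a null density set. -/
def NullDens (A : Set ℕ) : Prop := HasDens A 0

/-- The relation `A ⪯_𝒩 B`: there is a null density set `N` with `A ⊆ B ∪ N`. -/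
def DensLE (A B : Set ℕ) : Prop := ∃ N, NullDens N ∧ A ⊆ B ∪ N


open Filter Set

private lemma finI (A : Set ℕ) (n : ℕ) : (A ∩ Set.Icc 1 n).Finite :=
  (Set.finite_Icc 1 n).inter_of_right A

private lemma densSeq_eq (A : Set ℕ) (n : ℕ) :
    densSeq A n = ((A ∩ Set.Icc 1 n).ncard : ℝ) / n := rfl

private lemma cnt_mono {A B : Set ℕ} (h : A ⊆ B) (n : ℕ) :
    (A ∩ Set.Icc 1 n).ncard ≤ (B ∩ Set.Icc 1 n).ncard :=
  Set.ncard_le_ncard (Set.inter_subset_inter_left _ h) (finI B n)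

private lemma ncard_Icc_one (n : ℕ) : (Set.Icc 1 n).ncard = n := by
  rw [← Finset.coe_Icc, Set.ncard_coe_finset, Nat.card_Icc]; omega

private lemma cnt_le_n (A : Set ℕ) (n : ℕ) : (A ∩ Set.Icc 1 n).ncard ≤ n := by
  have := Set.ncard_le_ncard (Set.inter_subset_right (s := A) (t := Set.Icc 1 n))
    (Set.finite_Icc 1 n)
  rwa [ncard_Icc_one] at this

private lemma densSeq_nonneg (A : Set ℕ) (n : ℕ) : 0 ≤ densSeq A n := by
  rw [densSeq_eq]; positivity

private lemma densSeq_le_of_cnt_le {A B : Set ℕ} {n : ℕ}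
    (h : (A ∩ Set.Icc 1 n).ncard ≤ (B ∩ Set.Icc 1 n).ncard) :
    densSeq A n ≤ densSeq B n := by
  rw [densSeq_eq, densSeq_eq]
  gcongr

private lemma densSeq_mono {A B : Set ℕ} (h : A ⊆ B) (n : ℕ) :
    densSeq A n ≤ densSeq B n :=
  densSeq_le_of_cnt_le (cnt_mono h n)

private lemma densSeq_le_one (A : Set ℕ) (n : ℕ) : densSeq A n ≤ 1 := by
  rcases Nat.eq_zero_or_pos n with h0 | h0
  · subst h0; simp [densSeq_eq]
  · rw [densSeq_eq]
    rw [div_le_one (by exact_mod_cast h0)]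
    exact_mod_cast cnt_le_n A n

private lemma densSeq_union_le (A B : Set ℕ) (n : ℕ) :
    densSeq (A ∪ B) n ≤ densSeq A n + densSeq B n := by
  rw [densSeq_eq, densSeq_eq, densSeq_eq, ← add_div]
  rcases Nat.eq_zero_or_pos n with h0 | h0
  · subst h0; simp
  · gcongr
    rw [Set.union_inter_distrib_right]
    exact_mod_cast Set.ncard_union_le _ _

private lemma nullDens_of_subset {N A : Set ℕ} (hN : NullDens N) (h : A ⊆ N) :
    NullDens A :=
  tendsto_of_tendsto_of_tendsto_of_le_of_le tendsto_const_nhds hN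
    (densSeq_nonneg A) (densSeq_mono h)

private lemma nullDens_union {N M : Set ℕ} (hN : NullDens N) (hM : NullDens M) :
    NullDens (N ∪ M) := by
  have h2 : Tendsto (fun n => densSeq N n + densSeq M n) atTop (nhds 0) := by
    simpa using hN.add hM
  exact tendsto_of_tendsto_of_tendsto_of_le_of_le tendsto_const_nhds h2
    (densSeq_nonneg _) (fun n => densSeq_union_le N M n)

private lemma nullDens_finite {A : Set ℕ} (h : A.Finite) : NullDens A := by
  have h2 : Tendsto (fun n : ℕ => (A.ncard : ℝ) / n) atTop (nhds 0) :=
    tendsto_const_div_atTop_nhds_zero_nat _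
  refine tendsto_of_tendsto_of_tendsto_of_le_of_le tendsto_const_nhds h2
    (densSeq_nonneg _) (fun n => ?_)
  rw [densSeq_eq]
  rcases Nat.eq_zero_or_pos n with h0 | h0
  · subst h0; simp
  · gcongr
    exact Set.inter_subset_left

private lemma hasDens_union_null {A N : Set ℕ} {a : ℝ}
    (hA : HasDens A a) (hN : NullDens N) : HasDens (A ∪ N) a := by
  have h2 : Tendsto (fun n => densSeq A n + densSeq N n) atTop (nhds a) := by
    simpa using hA.add hN
  exact tendsto_of_tendsto_of_tendsto_of_le_of_le hA h2
    (densSeq_mono Set.subset_union_left) (densSeq_union_le A N)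

private lemma le_of_densLE {A B : Set ℕ} {x y : ℝ}
    (hx : HasDens A x) (hy : HasDens B y) (h : DensLE A B) : x ≤ y := by
  obtain ⟨N, hN, hsub⟩ := h
  have h2 : Tendsto (fun n => densSeq B n + densSeq N n) atTop (nhds y) := by
    simpa using hy.add hN
  simpa using le_of_tendsto_of_tendsto' hx h2
    (fun n => (densSeq_mono hsub n).trans (densSeq_union_le B N n))

private lemma null_biUnion (f : ℕ → Set ℕ) :
    ∀ k, (∀ i ≤ k, NullDens (f i)) → NullDens (⋃ i ≤ k, f i) := by
  intro k
  induction k with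
  | zero => intro h; simpa using h 0 le_rfl
  | succ k ih =>
    intro h
    rw [Set.biUnion_le_succ]
    exact nullDens_union (ih fun i hi => h i (hi.trans k.le_succ)) (h (k+1) le_rfl)

private def mseq (t : ℕ → ℕ) : ℕ → ℕ
  | 0 => t 0
  | k+1 => max (t (k+1)) (max (mseq t k + 1) ((k+1) * mseq t k))

private lemma mseq_t (t : ℕ → ℕ) : ∀ k, t k ≤ mseq t k
  | 0 => le_rfl
  | _+1 => le_max_left _ _

private lemma mseq_lt (t : ℕ → ℕ) (k : ℕ) : mseq t k < mseq t (k+1) :=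
  lt_of_lt_of_le (Nat.lt_succ_self _) (le_trans (le_max_left _ _) (le_max_right _ _))

private lemma mseq_mul (t : ℕ → ℕ) (k : ℕ) : (k+1) * mseq t k ≤ mseq t (k+1) :=
  le_trans (le_max_right _ _) (le_max_right _ _)

/-- Monotone convergence for natural density: if `(Aₙ)` is a sequence of
density sets with `Aₙ ⪯_𝒩 A_{n+1}` for every `n`, then there is a density set `A` which is
a `⪯_𝒩`-least upper bound of the `Aₙ` among density sets, and
`d(A) = sup_n d(Aₙ) = lim_n d(Aₙ)`. -/
theorem density_monotone_convergence (A : ℕ → Set ℕ) (a : ℕ → ℝ)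
    (hA : ∀ n, HasDens (A n) (a n))
    (hmono : ∀ n, DensLE (A n) (A (n + 1))) :
    ∃ B : Set ℕ,
      HasDens B (⨆ n, a n) ∧
      Filter.Tendsto a Filter.atTop (nhds (⨆ n, a n)) ∧
      (∀ n, DensLE (A n) B) ∧
      (∀ C : Set ℕ, IsDensitySet C → (∀ n, DensLE (A n) C) → DensLE B C) := by
  classical
  -- the chain relation
  have hchain : ∀ i k, i ≤ k → DensLE (A i) (A k) := by
    intro i k hik
    induction k, hik using Nat.le_induction with
    | base => exact ⟨∅, nullDens_finite Set.finite_empty, by simp⟩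
    | succ k hik ih =>
      obtain ⟨N1, h1, hs1⟩ := ih
      obtain ⟨N2, h2, hs2⟩ := hmono k
      refine ⟨N1 ∪ N2, nullDens_union h1 h2, fun x hx => ?_⟩
      rcases hs1 hx with h | h
      · rcases hs2 h with h' | h'
        · exact Or.inl h'
        · exact Or.inr (Or.inr h')
      · exact Or.inr (Or.inl h)
  have hdiffnull : ∀ i k, i ≤ k → NullDens (A i \ A k) := by
    intro i k hik
    obtain ⟨N, hN, hsub⟩ := hchain i k hik
    exact nullDens_of_subset hN (fun x hx => (hsub hx.1).resolve_left hx.2)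
  -- basic facts about a
  have ha_mono : Monotone a :=
    monotone_nat_of_le_succ fun n => le_of_densLE (hA n) (hA (n+1)) (hmono n)
  have ha_bdd : BddAbove (Set.range a) := by
    refine ⟨1, ?_⟩
    rintro x ⟨n, rfl⟩
    exact le_of_tendsto' (hA n) (densSeq_le_one (A n))
  set s := ⨆ n, a n with hs
  have ha_le : ∀ n, a n ≤ s := fun n => le_ciSup ha_bdd n
  have ha_tend : Tendsto a atTop (nhds s) := tendsto_atTop_ciSup ha_mono ha_bdd
  -- the increasing hulls A'
  set A' : ℕ → Set ℕ := fun k => ⋃ i ≤ k, A i with hA'def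
  have hsubA' : ∀ k, A k ⊆ A' k := fun k => Set.subset_biUnion_of_mem (le_refl k)
  have hA'mono : ∀ {i k : ℕ}, i ≤ k → A' i ⊆ A' k := by
    intro i k hik x hx
    obtain ⟨l, hl, hxl⟩ := Set.mem_iUnion₂.mp hx
    exact Set.mem_iUnion₂.mpr ⟨l, hl.trans hik, hxl⟩
  have hA'dens : ∀ k, HasDens (A' k) (a k) := by
    intro k
    have hnull : NullDens (A' k \ A k) := by
      refine nullDens_of_subset
        (null_biUnion (fun i => A i \ A k) k (fun i hik => hdiffnull i k hik)) ?_
      rintro x ⟨hx, hxk⟩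
      obtain ⟨i, hik, hxi⟩ := Set.mem_iUnion₂.mp hx
      exact Set.mem_iUnion₂.mpr ⟨i, hik, hxi, hxk⟩
    have hcup : A k ∪ (A' k \ A k) = A' k := Set.union_diff_cancel (hsubA' k)
    rw [show A' k = A k ∪ (A' k \ A k) from hcup.symm]
    exact hasDens_union_null (hA k) hnull
  -- thresholds
  have hth : ∀ k : ℕ, ∃ T, ∀ n, T ≤ n → |densSeq (A' k) n - a k| < 1/((k:ℝ)+1) := by
    intro k
    obtain ⟨T, hT⟩ := Metric.tendsto_atTop.mp (hA'dens k) (1/((k:ℝ)+1)) (by positivity)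
    exact ⟨T, fun n hn => by have := hT n hn; rwa [Real.dist_eq] at this⟩
  choose t ht using hth
  set m := mseq t with hm
  have hmt : ∀ k, t k ≤ m k := mseq_t t
  have hmlt : ∀ k, m k < m (k+1) := mseq_lt t
  have hmmul : ∀ k, (k+1) * m k ≤ m (k+1) := mseq_mul t
  have hmstrict : StrictMono m := strictMono_nat_of_lt_succ hmlt
  have hkm : ∀ k, k ≤ m k := by
    intro k
    induction k with
    | zero => exact Nat.zero_le _
    | succ k ih => exact lt_of_le_of_lt ih (hmlt k)
  -- locating n between consecutive m's
  have hfind : ∀ K n : ℕ, m K < n → ∃ k, K ≤ k ∧ m k < n ∧ n ≤ m (k+1) := by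
    intro K n h
    have hKn : K ≤ n := le_of_lt (lt_of_le_of_lt (hkm K) h)
    set k := Nat.findGreatest (fun i => m i < n) n with hkdef
    have h1 : m k < n := Nat.findGreatest_spec (P := fun i => m i < n) hKn h
    have h0 : K ≤ k := Nat.le_findGreatest (P := fun i => m i < n) hKn h
    refine ⟨k, h0, h1, ?_⟩
    by_contra hc
    push_neg at hc
    have hkn : k + 1 ≤ n := by
      have := hkm k
      omega
    have := Nat.le_findGreatest (P := fun i => m i < n) hkn hc
    omega
  set B : Set ℕ := ⋃ k, A' k ∩ Set.Ioc (m k) (m (k+1)) with hBdef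
  have hmem : ∀ j x, x ∈ A' j → m j < x → x ∈ B := by
    intro j x hx hlt
    obtain ⟨k, hjk, h1, h2⟩ := hfind j x hlt
    exact Set.mem_iUnion.mpr ⟨k, hA'mono hjk hx, h1, h2⟩
  have hBsub : ∀ k n, n ≤ m (k+1) → B ∩ Set.Icc 1 n ⊆ A' k ∩ Set.Icc 1 n := by
    rintro k n hn x ⟨hxB, hxI⟩
    obtain ⟨i, hi⟩ := Set.mem_iUnion.mp hxB
    have hik : i ≤ k := by
      by_contra hc
      push_neg at hc
      have := hmstrict.monotone (show k+1 ≤ i from hc)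
      have h2 := hi.2.1
      have h3 := hxI.2
      omega
    exact ⟨hA'mono hik hi.1, hxI⟩
  have hBup : ∀ k n, n ≤ m (k+1) → densSeq B n ≤ densSeq (A' k) n := fun k n h =>
    densSeq_le_of_cnt_le (Set.ncard_le_ncard (hBsub k n h) (finI _ n))
  have hBlow : ∀ j n : ℕ, densSeq (A' j) n ≤ densSeq B n + (m j : ℝ)/n := by
    intro j n
    rcases Nat.eq_zero_or_pos n with rfl | hn0
    · simp [densSeq_eq, densSeq_nonneg]
    · have hsub : A' j ∩ Set.Icc 1 n ⊆ (B ∩ Set.Icc 1 n) ∪ Set.Icc 1 (m j) := by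
        rintro x ⟨hx, hxI⟩
        rcases le_or_gt x (m j) with h | h
        · exact Or.inr ⟨hxI.1, h⟩
        · exact Or.inl ⟨hmem j x hx h, hxI⟩
      have hc : (A' j ∩ Set.Icc 1 n).ncard ≤ (B ∩ Set.Icc 1 n).ncard + m j := by
        calc (A' j ∩ Set.Icc 1 n).ncard
            ≤ ((B ∩ Set.Icc 1 n) ∪ Set.Icc 1 (m j)).ncard :=
              Set.ncard_le_ncard hsub ((finI B n).union (Set.finite_Icc _ _))
          _ ≤ (B ∩ Set.Icc 1 n).ncard + (Set.Icc 1 (m j)).ncard := Set.ncard_union_le _ _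
          _ = _ := by rw [ncard_Icc_one]
      have hnR : (0:ℝ) < n := by exact_mod_cast hn0
      rw [densSeq_eq, densSeq_eq, ← add_div]
      gcongr
      exact_mod_cast hc
  -- A n ⪯ B
  have hAB : ∀ n, DensLE (A n) B := by
    intro n
    refine ⟨Set.Icc 0 (m n), nullDens_finite (Set.finite_Icc 0 (m n)), fun x hx => ?_⟩
    rcases le_or_gt x (m n) with h | h
    · exact Or.inr ⟨Nat.zero_le x, h⟩
    · exact Or.inl (hmem n x (hsubA' n hx) h)
  -- density of B
  have hBdens : Tendsto (densSeq B) atTop (nhds s) := by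
    rw [Metric.tendsto_atTop]
    intro ε hε
    obtain ⟨K1, hK1⟩ := Metric.tendsto_atTop.mp ha_tend (ε/4) (by positivity)
    set K := max K1 ⌈4/ε⌉₊ + 1 with hK
    have hKinv : ∀ k : ℕ, K ≤ k → (1:ℝ)/k < ε/4 := by
      intro k hk
      have h4 : (4/ε : ℝ) ≤ (⌈4/ε⌉₊ : ℕ) := Nat.le_ceil _
      have hcl : ((⌈4/ε⌉₊ : ℕ) : ℝ) < k := by exact_mod_cast (by omega : ⌈4/ε⌉₊ < k)
      have hkR : (4/ε : ℝ) < k := lt_of_le_of_lt h4 hcl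
      have hkpos : (0:ℝ) < k := lt_of_le_of_lt (by positivity) hkR
      rw [div_lt_iff₀ hε] at hkR
      rw [div_lt_div_iff₀ hkpos (by norm_num : (0:ℝ) < 4)]
      linarith
    refine ⟨m K + 1, fun n hn => ?_⟩
    obtain ⟨k, hKk, h1, h2⟩ := hfind K n (by omega)
    have hk1 : 1 ≤ k := le_trans (by omega) hKk
    have hnpos : 0 < n := lt_of_le_of_lt (Nat.zero_le _) h1
    have hnR : (0:ℝ) < n := by exact_mod_cast hnpos
    have hkR : (0:ℝ) < k := by exact_mod_cast hk1
    have hinvk := hKinv k hKk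
    -- upper bound
    have hup : densSeq B n ≤ s + ε/4 := by
      have h3 := hBup k n h2
      have h4 := (abs_lt.mp (ht k n (le_trans (hmt k) h1.le))).2
      have h6 : (1:ℝ)/((k:ℝ)+1) ≤ 1/k := by
        apply one_div_le_one_div_of_le hkR
        linarith
      have := ha_le k
      linarith
    -- lower bound
    have hlow : s - ε < densSeq B n := by
      have hcast : ((k-1 : ℕ) : ℝ) + 1 = (k:ℝ) := by exact_mod_cast Nat.sub_add_cancel hk1
      have hmk1 : m (k-1) < m k := hmstrict (by omega)
      have htk1 : t (k-1) ≤ n := le_of_lt (lt_of_le_of_lt (le_trans (hmt _) hmk1.le) h1)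
      have h4 := (abs_lt.mp (ht (k-1) n htk1)).1
      rw [hcast] at h4
      have h3 := hBlow (k-1) n
      have h6 : (m (k-1) : ℝ)/n ≤ 1/k := by
        have hmul : k * m (k-1) ≤ m k := by
          have := hmmul (k-1)
          rwa [Nat.sub_add_cancel hk1] at this
        rw [div_le_div_iff₀ hnR hkR]
        have hle : ((k * m (k-1) : ℕ) : ℝ) ≤ (n:ℝ) := by
          exact_mod_cast le_of_lt (lt_of_le_of_lt hmul h1)
        push_cast at hle
        linarith
      have h7 : s - a (k-1) < ε/4 := by
        have h8 := hK1 (k-1) (by omega)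
        rw [Real.dist_eq] at h8
        have := (abs_lt.mp h8).1
        linarith
      linarith
    rw [Real.dist_eq, abs_lt]
    constructor <;> linarith
  -- least upper bound property
  have hlub : ∀ C : Set ℕ, IsDensitySet C → (∀ n, DensLE (A n) C) → DensLE B C := by
    intro C _ hAC
    choose NC hNC hNCs using hAC
    have hA'C : ∀ j, NullDens (A' j \ C) := by
      intro j
      refine nullDens_of_subset (null_biUnion NC j (fun i _ => hNC i)) ?_
      rintro x ⟨hx, hxC⟩
      obtain ⟨i, hij, hxi⟩ := Set.mem_iUnion₂.mp hx
      exact Set.mem_iUnion₂.mpr ⟨i, hij, (hNCs i hxi).resolve_left hxC⟩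
    refine ⟨B \ C, ?_, fun x hx => if hxC : x ∈ C then Or.inl hxC else Or.inr ⟨hx, hxC⟩⟩
    rw [NullDens, HasDens, Metric.tendsto_atTop]
    intro ε hε
    obtain ⟨J1, hJ1⟩ := Metric.tendsto_atTop.mp ha_tend (ε/8) (by positivity)
    set j := max J1 ⌈8/ε⌉₊ with hj
    have hja : s - a j < ε/8 := by
      have h8 := hJ1 j (le_max_left _ _)
      rw [Real.dist_eq] at h8
      have := (abs_lt.mp h8).1
      linarith
    have hjinv : (1:ℝ)/((j:ℝ)+1) < ε/8 := by
      have h8 : (8/ε : ℝ) ≤ (⌈8/ε⌉₊ : ℕ) := Nat.le_ceil _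
      have hcl : ((⌈8/ε⌉₊:ℕ):ℝ) ≤ (j:ℝ) := by exact_mod_cast le_max_right J1 _
      have hlt : (8/ε : ℝ) < (j:ℝ) + 1 := by linarith
      rw [div_lt_iff₀ hε] at hlt
      rw [div_lt_div_iff₀ (by positivity) (by norm_num : (0:ℝ) < 8)]
      linarith
    obtain ⟨T, hT⟩ := Metric.tendsto_atTop.mp (hA'C j) (ε/2) (by positivity)
    refine ⟨max T (m j) + 1, fun n hn => ?_⟩
    obtain ⟨k, hjk, h1, h2⟩ := hfind j n (by omega)
    have hnpos : (0:ℝ) < n := by exact_mod_cast (lt_of_le_of_lt (Nat.zero_le _) h1 : 0 < n)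
    -- counting inequality
    have hsplit : densSeq (B \ C) n + densSeq (A' j) n
        ≤ densSeq (A' j \ C) n + densSeq (A' k) n := by
      have hsub2 : (B \ C) ∩ Set.Icc 1 n ⊆
          ((A' j \ C) ∩ Set.Icc 1 n) ∪ ((A' k \ A' j) ∩ Set.Icc 1 n) := by
        rintro x ⟨⟨hxB, hxC⟩, hxI⟩
        have hxk : x ∈ A' k := (hBsub k n h2 ⟨hxB, hxI⟩).1
        by_cases hxj : x ∈ A' j
        · exact Or.inl ⟨⟨hxj, hxC⟩, hxI⟩
        · exact Or.inr ⟨⟨hxk, hxj⟩, hxI⟩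
      have hc1 : ((B \ C) ∩ Set.Icc 1 n).ncard ≤
          ((A' j \ C) ∩ Set.Icc 1 n).ncard + ((A' k \ A' j) ∩ Set.Icc 1 n).ncard :=
        le_trans (Set.ncard_le_ncard hsub2 ((finI _ n).union (finI _ n)))
          (Set.ncard_union_le _ _)
      have hc2 : (A' j ∩ Set.Icc 1 n).ncard + ((A' k \ A' j) ∩ Set.Icc 1 n).ncard
          = (A' k ∩ Set.Icc 1 n).ncard := by
        rw [← Set.ncard_union_eq
          (Set.disjoint_sdiff_right.mono Set.inter_subset_left Set.inter_subset_left)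
          (finI _ n) (finI _ n)]
        rw [← Set.union_inter_distrib_right, Set.union_diff_cancel (hA'mono hjk)]
      rw [densSeq_eq, densSeq_eq, densSeq_eq, densSeq_eq, ← add_div,
        ← add_div]
      have hnum : ((B \ C) ∩ Set.Icc 1 n).ncard + (A' j ∩ Set.Icc 1 n).ncard ≤
          ((A' j \ C) ∩ Set.Icc 1 n).ncard + (A' k ∩ Set.Icc 1 n).ncard := by omega
      have hnumR : (((((B \ C) ∩ Set.Icc 1 n).ncard + (A' j ∩ Set.Icc 1 n).ncard) : ℕ) : ℝ) ≤
          (((((A' j \ C) ∩ Set.Icc 1 n).ncard + (A' k ∩ Set.Icc 1 n).ncard) : ℕ) : ℝ) := by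
        exact_mod_cast hnum
      push_cast at hnumR
      exact div_le_div_of_nonneg_right hnumR hnpos.le
    have hd1 : densSeq (A' j \ C) n < ε/2 := by
      have := hT n (by omega)
      rw [Real.dist_eq, sub_zero] at this
      exact lt_of_le_of_lt (le_abs_self _) this
    have hd2 : densSeq (A' k) n < a k + 1/((k:ℝ)+1) := by
      have := (abs_lt.mp (ht k n (le_trans (hmt k) h1.le))).2
      linarith
    have hd3 : a j - 1/((j:ℝ)+1) < densSeq (A' j) n := by
      have htj : t j ≤ n := by
        have : m j < n := by omega
        exact le_of_lt (lt_of_le_of_lt (hmt j) this)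
      have := (abs_lt.mp (ht j n htj)).1
      linarith
    have hjk' : (1:ℝ)/((k:ℝ)+1) ≤ 1/((j:ℝ)+1) := by
      apply one_div_le_one_div_of_le (by positivity)
      have : (j:ℝ) ≤ (k:ℝ) := by exact_mod_cast hjk
      linarith
    rw [Real.dist_eq, sub_zero, abs_of_nonneg (densSeq_nonneg _ _)]
    have hak := ha_le k
    linarith
  exact ⟨B, hBdens, ha_tend, hAB, hlub⟩
end

section
/- Let L be a bounded lattice, φ : L → [0,1] any mapping, and define φ*(A) := ‖1 ⊗ A‖_{L¹(L,φ)}. Then for every 1 ≤ p < ∞ and every x ∈ X, the seminorms built from φ* and from φ coincide: ‖x‖_{L^p(L,φ*)} = ‖x‖_{L^p(L,φ)}. -/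
/-- The subspace `Δ ⊆ c₀₀(L)` spanned by `e_𝟬` and the vectors
`(e_A + e_B) − (e_{A∨B} + e_{A∧B})`. -/
noncomputable def deltaSpan (L : Type*) [Lattice L] [BoundedOrder L] :
    Submodule ℝ (L →₀ ℝ) :=
  Submodule.span ℝ
    ({Finsupp.single (⊥ : L) (1 : ℝ)} ∪
      {f : L →₀ ℝ | ∃ A B : L,
        f = Finsupp.single A 1 + Finsupp.single B 1
          - (Finsupp.single (A ⊔ B) 1 + Finsupp.single (A ⊓ B) 1)})

/-- The quotient space `X = c₀₀(L)/Δ`. -/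
abbrev XSpace (L : Type*) [Lattice L] [BoundedOrder L] :=
  (L →₀ ℝ) ⧸ deltaSpan L

/-- The element `a ⊗ A := q(a·e_A)` of `X`. -/
noncomputable def tens (L : Type*) [Lattice L] [BoundedOrder L] (a : ℝ) (A : L) :
    XSpace L :=
  Submodule.Quotient.mk (Finsupp.single A a)

/-- The smallest preorder `⊑` on `X` that is translation invariant, invariant under
multiplication by positive scalars, and satisfies `a ⊗ A ⊑ b ⊗ A` for `a ≤ b` and
`1 ⊗ A ⊑ 1 ⊗ B` for `A ≤ B`. -/
inductive SqLe (L : Type*) [Lattice L] [BoundedOrder L] : XSpace L → XSpace L → Prop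
  | refl (x : XSpace L) : SqLe L x x
  | trans {x y z : XSpace L} : SqLe L x y → SqLe L y z → SqLe L x z
  | add_right {x y : XSpace L} (z : XSpace L) : SqLe L x y → SqLe L (x + z) (y + z)
  | smul_pos {x y : XSpace L} (c : ℝ) : 0 < c → SqLe L x y → SqLe L (c • x) (c • y)
  | coeff (a b : ℝ) (A : L) : a ≤ b → SqLe L (tens L a A) (tens L b A)
  | mono (A B : L) : A ≤ B → SqLe L (tens L 1 A) (tens L 1 B)

/-- The `L^p(L, φ)`-seminorm on `X`:
`‖x‖ = inf { (∑ₖ |bₖ|^p φ(Bₖ))^{1/p} : ±x ⊑ ∑ₖ |bₖ| ⊗ Bₖ }`,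
the infimum taken over finite families `(bₖ) ⊆ ℝ`, `(Bₖ) ⊆ L`. -/
noncomputable def lpSeminorm (L : Type*) [Lattice L] [BoundedOrder L]
    (φ : L → ℝ) (p : ℝ) (x : XSpace L) : ℝ :=
  sInf {r : ℝ | ∃ (n : ℕ) (b : Fin n → ℝ) (B : Fin n → L),
    SqLe L x (∑ k, tens L |b k| (B k)) ∧
    SqLe L (-x) (∑ k, tens L |b k| (B k)) ∧
    r = (∑ k, |b k| ^ p * φ (B k)) ^ (1 / p)}

section Aux

variable {L : Type*} [Lattice L] [BoundedOrder L]

theorem tens_add (a b : ℝ) (A : L) : tens L (a + b) A = tens L a A + tens L b A := by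
  rw [tens, tens, tens, Finsupp.single_add, Submodule.Quotient.mk_add]

theorem tens_neg (a : ℝ) (A : L) : tens L (-a) A = -tens L a A := by
  rw [tens, tens, Finsupp.single_neg, Submodule.Quotient.mk_neg]

theorem tens_smul (c a : ℝ) (A : L) : c • tens L a A = tens L (c * a) A := by
  rw [tens, tens, ← Submodule.Quotient.mk_smul, Finsupp.smul_single']

theorem mk_single (a : ℝ) (A : L) :
    (Submodule.Quotient.mk (Finsupp.single A a) : XSpace L) = tens L a A := rfl

theorem SqLe.add {x y z w : XSpace L} (h1 : SqLe L x y) (h2 : SqLe L z w) :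
    SqLe L (x + z) (y + w) := by
  have a := h1.add_right z
  have b := h2.add_right y
  rw [add_comm z y, add_comm w y] at b
  exact a.trans b

theorem SqLe.smul_nonneg {x y : XSpace L} {c : ℝ} (hc : 0 ≤ c) (h : SqLe L x y) :
    SqLe L (c • x) (c • y) := by
  rcases eq_or_lt_of_le hc with h0 | h0
  · rw [← h0, zero_smul, zero_smul]; exact SqLe.refl 0
  · exact SqLe.smul_pos c h0 h

theorem SqLe.finsetSum {ι : Type*} (s : Finset ι) (f g : ι → XSpace L)
    (h : ∀ i ∈ s, SqLe L (f i) (g i)) :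
    SqLe L (∑ i ∈ s, f i) (∑ i ∈ s, g i) := by
  classical
  induction s using Finset.induction with
  | empty => simpa using SqLe.refl (L := L) 0
  | insert a s' hnot ih =>
      rw [Finset.sum_insert hnot, Finset.sum_insert hnot]
      exact (h a (Finset.mem_insert_self a s')).add
        (ih fun i hi => h i (Finset.mem_insert_of_mem hi))

theorem exists_decomp (x : XSpace L) :
    ∃ (n : ℕ) (b : Fin n → ℝ) (B : Fin n → L),
      SqLe L x (∑ k, tens L |b k| (B k)) ∧ SqLe L (-x) (∑ k, tens L |b k| (B k)) := by
  obtain ⟨f, rfl⟩ := Submodule.Quotient.mk_surjective (deltaSpan L) x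
  induction f using Finsupp.induction with
  | zero =>
      refine ⟨0, Fin.elim0, Fin.elim0, ?_, ?_⟩ <;>
        · simpa using SqLe.refl (L := L) 0
  | single_add a r f _ _ ih =>
      obtain ⟨n, b, B, h1, h2⟩ := ih
      have hsum : ∑ k : Fin (n + 1), tens L |(Fin.cons r b : Fin (n + 1) → ℝ) k| ((Fin.cons a B : Fin (n + 1) → L) k)
          = tens L |r| a + ∑ k : Fin n, tens L |b k| (B k) := by
        rw [Fin.sum_univ_succ]; simp
      refine ⟨n + 1, Fin.cons r b, Fin.cons a B, ?_, ?_⟩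
      · rw [hsum, Submodule.Quotient.mk_add, mk_single]
        exact (SqLe.coeff r |r| a (le_abs_self r)).add h1
      · rw [hsum, Submodule.Quotient.mk_add, mk_single, neg_add, ← tens_neg]
        exact (SqLe.coeff (-r) |r| a (neg_le_abs r)).add h2

/-- The set whose infimum defines `lpSeminorm`. -/
def lpSet (φ : L → ℝ) (p : ℝ) (x : XSpace L) : Set ℝ :=
  {r : ℝ | ∃ (n : ℕ) (b : Fin n → ℝ) (B : Fin n → L),
    SqLe L x (∑ k, tens L |b k| (B k)) ∧
    SqLe L (-x) (∑ k, tens L |b k| (B k)) ∧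
    r = (∑ k, |b k| ^ p * φ (B k)) ^ (1 / p)}

theorem lpSeminorm_eq_sInf (φ : L → ℝ) (p : ℝ) (x : XSpace L) :
    lpSeminorm L φ p x = sInf (lpSet φ p x) := rfl

theorem lpSet_nonneg {φ : L → ℝ} (hφ : ∀ A, 0 ≤ φ A) {p : ℝ} {x : XSpace L} :
    ∀ r ∈ lpSet φ p x, 0 ≤ r := by
  rintro r ⟨n, b, B, -, -, rfl⟩
  exact Real.rpow_nonneg (Finset.sum_nonneg fun k _ =>
    mul_nonneg (Real.rpow_nonneg (abs_nonneg _) _) (hφ _)) _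

theorem lpSet_bddBelow {φ : L → ℝ} (hφ : ∀ A, 0 ≤ φ A) {p : ℝ} {x : XSpace L} :
    BddBelow (lpSet φ p x) :=
  ⟨0, fun r hr => lpSet_nonneg hφ r hr⟩

theorem lpSet_nonempty (φ : L → ℝ) (p : ℝ) (x : XSpace L) :
    (lpSet φ p x).Nonempty := by
  obtain ⟨n, b, B, h1, h2⟩ := exists_decomp x
  exact ⟨_, n, b, B, h1, h2, rfl⟩

theorem mem_lpSet_of_fintype {ι : Type*} [Fintype ι] {φ : L → ℝ} {p : ℝ} {x : XSpace L}
    (b : ι → ℝ) (B : ι → L)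
    (h1 : SqLe L x (∑ i, tens L |b i| (B i)))
    (h2 : SqLe L (-x) (∑ i, tens L |b i| (B i))) :
    (∑ i, |b i| ^ p * φ (B i)) ^ (1 / p) ∈ lpSet φ p x := by
  classical
  let e := (Fintype.equivFin ι).symm
  have hs : ∑ k, tens L |(b ∘ e) k| ((B ∘ e) k) = ∑ i, tens L |b i| (B i) :=
    Fintype.sum_equiv e _ _ fun k => rfl
  have hc : ∑ k, |(b ∘ e) k| ^ p * φ ((B ∘ e) k) = ∑ i, |b i| ^ p * φ (B i) :=
    Fintype.sum_equiv e _ _ fun k => rfl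
  refine ⟨Fintype.card ι, b ∘ e, B ∘ e, ?_, ?_, ?_⟩
  · rw [hs]; exact h1
  · rw [hs]; exact h2
  · rw [hc]

theorem phiStar_nonneg (φ : L → ℝ) (hφ0 : ∀ A, 0 ≤ φ A) (A : L) :
    0 ≤ lpSeminorm L φ 1 (tens L 1 A) := by
  rw [lpSeminorm_eq_sInf]
  exact le_csInf (lpSet_nonempty _ _ _) (lpSet_nonneg hφ0)

theorem phiStar_le (φ : L → ℝ) (hφ0 : ∀ A, 0 ≤ φ A) (A : L) :
    lpSeminorm L φ 1 (tens L 1 A) ≤ φ A := by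
  rw [lpSeminorm_eq_sInf]
  have hsum : (∑ _k : Fin 1, tens L |(1 : ℝ)| A) = tens L 1 A := by simp
  refine csInf_le (lpSet_bddBelow hφ0) ⟨1, fun _ => 1, fun _ => A, ?_, ?_, ?_⟩
  · rw [hsum]; exact SqLe.refl _
  · rw [hsum, ← tens_neg]
    exact SqLe.coeff (-1) 1 A (by norm_num)
  · simp

theorem lp_weight_mono {φ ψ : L → ℝ} (hψ0 : ∀ A, 0 ≤ ψ A) (hle : ∀ A, ψ A ≤ φ A)
    {p : ℝ} (hp : 0 < p) (x : XSpace L) :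
    lpSeminorm L ψ p x ≤ lpSeminorm L φ p x := by
  rw [lpSeminorm_eq_sInf, lpSeminorm_eq_sInf]
  refine le_csInf (lpSet_nonempty φ p x) ?_
  rintro r ⟨n, b, B, h1, h2, rfl⟩
  have hmem : (∑ k, |b k| ^ p * ψ (B k)) ^ (1 / p) ∈ lpSet ψ p x :=
    ⟨n, b, B, h1, h2, rfl⟩
  refine (csInf_le (lpSet_bddBelow hψ0) hmem).trans ?_
  refine Real.rpow_le_rpow (Finset.sum_nonneg fun k _ =>
      mul_nonneg (Real.rpow_nonneg (abs_nonneg _) _) (hψ0 _))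
    (Finset.sum_le_sum fun k _ =>
      mul_le_mul_of_nonneg_left (hle _) (Real.rpow_nonneg (abs_nonneg _) _)) (by positivity)

theorem split_lemma {φ : L → ℝ} (hφ0 : ∀ A, 0 ≤ φ A) {p : ℝ} (hp : 1 ≤ p)
    {m : ℕ} (c : Fin m → ℝ) (C : Fin m → L) :
    ∃ (M : ℕ) (c' : Fin M → ℝ) (C' : Fin M → L),
      (∑ i, tens L |c' i| (C' i)) = (∑ j, tens L |c j| (C j)) ∧
      (∑ i, |c' i| ^ p * φ (C' i)) ≤ ∑ j, |c j| * φ (C j) := by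
  classical
  set nn : Fin m → ℕ := fun j => max 1 ⌈|c j|⌉₊ with hnn
  have hnnpos : ∀ j, (0 : ℝ) < nn j := fun j => by
    have : (1 : ℕ) ≤ nn j := le_max_left _ _
    exact_mod_cast Nat.lt_of_lt_of_le Nat.zero_lt_one this
  have ht01 : ∀ j, |c j| / nn j ≤ 1 := fun j => by
    rw [div_le_one (hnnpos j)]
    exact (Nat.le_ceil _).trans (Nat.cast_le.mpr (le_max_right _ _))
  have ht0 : ∀ j, (0 : ℝ) ≤ |c j| / nn j := fun j =>
    div_nonneg (abs_nonneg _) (hnnpos j).le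
  set f : (Σ j : Fin m, Fin (nn j)) → ℝ := fun s => |c s.1| / nn s.1 with hf
  set G : (Σ j : Fin m, Fin (nn j)) → L := fun s => C s.1 with hG
  have e1 : ∑ s : Σ j : Fin m, Fin (nn j), tens L |f s| (G s)
      = ∑ j, tens L |c j| (C j) := by
    rw [← Finset.univ_sigma_univ, Finset.sum_sigma]
    refine Finset.sum_congr rfl fun j _ => ?_
    simp only [hf, hG]
    rw [Finset.sum_const, Finset.card_univ, Fintype.card_fin,
      ← Nat.cast_smul_eq_nsmul ℝ, tens_smul, abs_of_nonneg (ht0 j)]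
    congr 1
    field_simp
    exact mul_div_cancel_left₀ _ (hnnpos j).ne'
  have e2 : ∑ s : Σ j : Fin m, Fin (nn j), |f s| ^ p * φ (G s)
      ≤ ∑ j, |c j| * φ (C j) := by
    rw [← Finset.univ_sigma_univ, Finset.sum_sigma]
    refine Finset.sum_le_sum fun j _ => ?_
    simp only [hf, hG]
    rw [Finset.sum_const, Finset.card_univ, Fintype.card_fin, nsmul_eq_mul,
      abs_of_nonneg (ht0 j)]
    have htp : (|c j| / nn j) ^ p ≤ |c j| / nn j := by
      have h := Real.rpow_le_rpow_of_exponent_ge' (ht0 j) (ht01 j) zero_le_one hp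
      rwa [Real.rpow_one] at h
    calc (nn j : ℝ) * ((|c j| / nn j) ^ p * φ (C j))
        ≤ (nn j : ℝ) * ((|c j| / nn j) * φ (C j)) :=
          mul_le_mul_of_nonneg_left (mul_le_mul_of_nonneg_right htp (hφ0 _)) (hnnpos j).le
      _ = |c j| * φ (C j) := by
          rw [← mul_assoc, mul_div_cancel₀]
          exact (hnnpos j).ne'
  let e := (Fintype.equivFin (Σ j : Fin m, Fin (nn j))).symm
  refine ⟨Fintype.card (Σ j : Fin m, Fin (nn j)), f ∘ e, G ∘ e, ?_, ?_⟩
  · rw [show ∑ i, tens L |(f ∘ e) i| ((G ∘ e) i)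
        = ∑ s : Σ j : Fin m, Fin (nn j), tens L |f s| (G s) from
      Fintype.sum_equiv e _ _ fun i => rfl]
    exact e1
  · rw [show ∑ i, |(f ∘ e) i| ^ p * φ ((G ∘ e) i)
        = ∑ s : Σ j : Fin m, Fin (nn j), |f s| ^ p * φ (G s) from
      Fintype.sum_equiv e _ _ fun i => rfl]
    exact e2

theorem lp_le_star {φ : L → ℝ} (hφ0 : ∀ A, 0 ≤ φ A) {p : ℝ} (hp : 1 ≤ p) (x : XSpace L) :
    lpSeminorm L φ p x
      ≤ lpSeminorm L (fun A => lpSeminorm L φ 1 (tens L 1 A)) p x := by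
  classical
  set φs : L → ℝ := fun A => lpSeminorm L φ 1 (tens L 1 A) with hφs
  have hp0 : (0 : ℝ) < p := lt_of_lt_of_le one_pos hp
  rw [lpSeminorm_eq_sInf φs]
  refine le_csInf (lpSet_nonempty _ _ _) ?_
  rintro r ⟨n, b, B, h1, h2, rfl⟩
  set S := ∑ k, |b k| ^ p * φs (B k) with hS
  set T := ∑ k, |b k| ^ p with hT
  have hT0 : (0 : ℝ) ≤ T := Finset.sum_nonneg fun k _ => Real.rpow_nonneg (abs_nonneg _) _
  have key : ∀ ε : ℝ, 0 < ε → lpSeminorm L φ p x ≤ (S + ε * T) ^ (1 / p) := by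
    intro ε hε
    have hdec : ∀ k : Fin n, ∃ (m : ℕ) (c : Fin m → ℝ) (C : Fin m → L),
        SqLe L (tens L 1 (B k)) (∑ j, tens L |c j| (C j)) ∧
        SqLe L (-(tens L 1 (B k))) (∑ j, tens L |c j| (C j)) ∧
        ∑ j, |c j| * φ (C j) ≤ φs (B k) + ε := by
      intro k
      have hlt : sInf (lpSet φ 1 (tens L 1 (B k))) < φs (B k) + ε := by
        have : φs (B k) = sInf (lpSet φ 1 (tens L 1 (B k))) := lpSeminorm_eq_sInf φ 1 _
        linarith
      obtain ⟨r', hr', hlt'⟩ := exists_lt_of_csInf_lt (lpSet_nonempty _ _ _) hlt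
      obtain ⟨m, c, C, g1, g2, rfl⟩ := hr'
      refine ⟨m, c, C, g1, g2, ?_⟩
      have hval : (∑ j, |c j| ^ (1 : ℝ) * φ (C j)) ^ (1 / (1 : ℝ))
          = ∑ j, |c j| * φ (C j) := by
        simp [Real.rpow_one]
      rw [hval] at hlt'
      exact hlt'.le
    choose m c C g1 g2 gcost using hdec
    have hsplit : ∀ k : Fin n, ∃ (M : ℕ) (c' : Fin M → ℝ) (C' : Fin M → L),
        (∑ i, tens L |c' i| (C' i)) = (∑ j, tens L |c k j| (C k j)) ∧
        (∑ i, |c' i| ^ p * φ (C' i)) ≤ ∑ j, |c k j| * φ (C k j) :=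
      fun k => split_lemma hφ0 hp (c k) (C k)
    choose M c' C' heq hcost using hsplit
    set d : (Σ k : Fin n, Fin (M k)) → ℝ := fun s => |b s.1| * |c' s.1 s.2| with hd
    have hdabs : ∀ s : Σ k : Fin n, Fin (M k), |d s| = |b s.1| * |c' s.1 s.2| := fun s => by
      rw [hd]; exact abs_of_nonneg (mul_nonneg (abs_nonneg _) (abs_nonneg _))
    have hstep : ∀ k : Fin n, SqLe L (tens L |b k| (B k))
        (∑ i : Fin (M k), tens L (|b k| * |c' k i|) (C' k i)) := by
      intro k
      have hk : SqLe L (tens L 1 (B k)) (∑ i : Fin (M k), tens L |c' k i| (C' k i)) := by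
        rw [heq k]; exact g1 k
      have hsm := SqLe.smul_nonneg (abs_nonneg (b k)) hk
      rw [tens_smul, mul_one, Finset.smul_sum] at hsm
      simpa only [tens_smul] using hsm
    have hmid : SqLe L (∑ k, tens L |b k| (B k))
        (∑ s : Σ k : Fin n, Fin (M k), tens L |d s| (C' s.1 s.2)) := by
      have hsum_eq : (∑ s : Σ k : Fin n, Fin (M k), tens L |d s| (C' s.1 s.2))
          = ∑ k, ∑ i : Fin (M k), tens L (|b k| * |c' k i|) (C' k i) := by
        rw [← Finset.univ_sigma_univ, Finset.sum_sigma]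
        exact Finset.sum_congr rfl fun k _ =>
          Finset.sum_congr rfl fun i _ => by rw [hdabs ⟨k, i⟩]
      rw [hsum_eq]
      exact SqLe.finsetSum _ _ _ fun k _ => hstep k
    have hx : SqLe L x (∑ s : Σ k : Fin n, Fin (M k), tens L |d s| (C' s.1 s.2)) :=
      h1.trans hmid
    have hnx : SqLe L (-x) (∑ s : Σ k : Fin n, Fin (M k), tens L |d s| (C' s.1 s.2)) :=
      h2.trans hmid
    have hmem := mem_lpSet_of_fintype (φ := φ) (p := p) d (fun s => C' s.1 s.2) hx hnx
    have hcost2 : ∑ s : Σ k : Fin n, Fin (M k), |d s| ^ p * φ (C' s.1 s.2) ≤ S + ε * T := by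
      rw [← Finset.univ_sigma_univ, Finset.sum_sigma]
      have hterm : ∀ k : Fin n, ∑ i : Fin (M k), |d ⟨k, i⟩| ^ p * φ (C' k i)
          = |b k| ^ p * ∑ i : Fin (M k), |c' k i| ^ p * φ (C' k i) := by
        intro k
        rw [Finset.mul_sum]
        refine Finset.sum_congr rfl fun i _ => ?_
        rw [hdabs ⟨k, i⟩, Real.mul_rpow (abs_nonneg _) (abs_nonneg _), mul_assoc]
      calc ∑ k, ∑ i : Fin (M k), |d ⟨k, i⟩| ^ p * φ (C' k i)
          = ∑ k, |b k| ^ p * ∑ i : Fin (M k), |c' k i| ^ p * φ (C' k i) :=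
            Finset.sum_congr rfl fun k _ => hterm k
        _ ≤ ∑ k, |b k| ^ p * (φs (B k) + ε) :=
            Finset.sum_le_sum fun k _ => mul_le_mul_of_nonneg_left
              ((hcost k).trans (gcost k)) (Real.rpow_nonneg (abs_nonneg _) _)
        _ = S + ε * T := by
            rw [hS, hT, Finset.mul_sum, ← Finset.sum_add_distrib]
            exact Finset.sum_congr rfl fun k _ => by ring
    rw [lpSeminorm_eq_sInf]
    refine (csInf_le (lpSet_bddBelow hφ0) hmem).trans ?_
    exact Real.rpow_le_rpow (Finset.sum_nonneg fun s _ =>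
      mul_nonneg (Real.rpow_nonneg (abs_nonneg _) _) (hφ0 _)) hcost2 (by positivity)
  have hcont : ContinuousAt (fun ε : ℝ => (S + ε * T) ^ (1 / p)) 0 := by
    have hin : ContinuousAt (fun ε : ℝ => S + ε * T) 0 :=
      (continuous_const.add (continuous_id.mul continuous_const)).continuousAt
    have hout : ContinuousAt (fun y : ℝ => y ^ (1 / p)) (S + 0 * T) :=
      Real.continuousAt_rpow_const _ _ (Or.inr (by positivity))
    exact ContinuousAt.comp (g := fun y : ℝ => y ^ (1 / p))
      (f := fun ε : ℝ => S + ε * T) (x := (0 : ℝ)) hout hin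
  have htend : Filter.Tendsto (fun ε : ℝ => (S + ε * T) ^ (1 / p))
      (nhdsWithin 0 (Set.Ioi 0)) (nhds (S ^ (1 / p))) := by
    have h := hcont.tendsto.mono_left (nhdsWithin_le_nhds (s := Set.Ioi (0 : ℝ)))
    simpa using h
  exact ge_of_tendsto htend
    (Filter.eventually_of_mem self_mem_nhdsWithin fun ε hε => key ε hε)

end Aux

/-- For any mapping `φ : L → [0,1]` on a bounded lattice `L`, letting
`φ*(A) := ‖1 ⊗ A‖_{L¹(L,φ)}`, the seminorms built from `φ*` and from `φ` coincide:
`‖x‖_{L^p(L,φ*)} = ‖x‖_{L^p(L,φ)}` for every `1 ≤ p < ∞` and every `x ∈ X`. -/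
theorem lpSeminorm_starMap_eq {L : Type*} [Lattice L] [BoundedOrder L]
    (φ : L → ℝ) (hφ0 : ∀ A, 0 ≤ φ A) (hφ1 : ∀ A, φ A ≤ 1)
    (p : ℝ) (hp : 1 ≤ p) (x : XSpace L) :
    lpSeminorm L (fun A => lpSeminorm L φ 1 (tens L 1 A)) p x
      = lpSeminorm L φ p x := by
  refine le_antisymm ?_ (lp_le_star hφ0 hp x)
  exact lp_weight_mono (phiStar_nonneg φ hφ0) (phiStar_le φ hφ0) (lt_of_lt_of_le one_pos hp) x
end
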